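/- Let μ : ℝ → [0,∞) be nonincreasing and differentiable with μ(t) → 0 as t → max, let c > 0, and suppose that for all t, n κ_n^{1/n} μ(t)^{1-1/n} ≤ (∫_{Ω_t} e^{c w} dx)^{1/n}(-μ'(t))^{1-1/n} where Ω_t = {w > t}, μ(t) = |Ω_t|, and c = (n/(n-1))λ_n with λ_n = n^{n/(n-1)} κ_n^{1/(n-1)}. If I = ∫_{ℝ^n} e^{c w} dx is finite and positive, then I ≥ 1. -/

import Mathlib

open MeasureTheory Filter

set_option maxHeartbeats 1000000 in
theorem level_set_lower_bound (n : ℕ) (hn : 2 ≤ n)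
    (κ lamn c : ℝ) (hκ : 0 < κ)
    (hlam : lamn = (n : ℝ) ^ ((n : ℝ) / (n - 1)) * κ ^ ((1 : ℝ) / (n - 1)))
    (hc : c = ((n : ℝ) / (n - 1)) * lamn)
    (w : EuclideanSpace ℝ (Fin n) → ℝ) (T : ℝ)
    (hT : ∃ x₀, w x₀ = T ∧ ∀ x, w x ≤ T)
    (μ μ' : ℝ → ℝ)
    (hμ : ∀ t, μ t = (volume {x : EuclideanSpace ℝ (Fin n) | t < w x}).toReal)
    (hmono : Antitone μ)
    (hderiv : ∀ t, HasDerivAt μ (μ' t) t)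
    (htend : Tendsto μ (nhdsWithin T (Set.Iio T)) (nhds 0))
    (hineq : ∀ t : ℝ,
      (n : ℝ) * κ ^ ((1 : ℝ) / n) * (μ t) ^ (1 - (1 : ℝ) / n) ≤
        (∫ x in {x : EuclideanSpace ℝ (Fin n) | t < w x},
            Real.exp (c * w x)) ^ ((1 : ℝ) / n) * (-μ' t) ^ (1 - (1 : ℝ) / n))
    (hint : Integrable (fun x : EuclideanSpace ℝ (Fin n) => Real.exp (c * w x)))
    (hpos : 0 < ∫ x : EuclideanSpace ℝ (Fin n), Real.exp (c * w x)) :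
    1 ≤ ∫ x : EuclideanSpace ℝ (Fin n), Real.exp (c * w x) := by
  -- basic numerics
  set r : ℝ := (n : ℝ) with hr
  have hr2 : (2 : ℝ) ≤ r := by rw [hr]; exact_mod_cast hn
  have hr0 : (0 : ℝ) < r := by linarith
  have hr1 : (0 : ℝ) < r - 1 := by linarith
  set a : ℝ := r / (r - 1) with ha
  have ha1 : 1 < a := by
    rw [ha, lt_div_iff₀ hr1]; linarith
  have ha0 : 0 < a := by linarith
  have hlam0 : 0 < lamn := by
    rw [hlam]
    exact mul_pos (Real.rpow_pos_of_pos hr0 _) (Real.rpow_pos_of_pos hκ _)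
  have hc0 : 0 < c := by rw [hc]; exact mul_pos ha0 hlam0
  have hca : c = a * lamn := hc
  -- measurable representative v of w
  obtain ⟨g, hgm, hgeq⟩ := hint.1.aemeasurable
  set v : EuclideanSpace ℝ (Fin n) → ℝ := fun x => Real.log (g x) / c with hv
  have hvm : Measurable v := (Real.measurable_log.comp hgm).div_const c
  have hvw : (fun x => w x) =ᵐ[volume] v := by
    filter_upwards [hgeq] with x hx
    rw [hv]
    simp only
    rw [← hx, Real.log_exp, mul_div_cancel_left₀ _ (ne_of_gt hc0)]
  -- transfer everything to v
  have hsetae : ∀ t : ℝ, {x : EuclideanSpace ℝ (Fin n) | t < w x} =ᵐ[volume]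
      {x : EuclideanSpace ℝ (Fin n) | t < v x} := by
    intro t
    filter_upwards [hvw] with x hx
    show (t < w x) = (t < v x)
    rw [hx]
  have hfunae : (fun x => Real.exp (c * w x)) =ᵐ[volume] (fun x => Real.exp (c * v x)) := by
    filter_upwards [hvw] with x hx; rw [hx]
  have hintv : Integrable (fun x : EuclideanSpace ℝ (Fin n) => Real.exp (c * v x)) :=
    hint.congr hfunae
  set I : ℝ := ∫ x : EuclideanSpace ℝ (Fin n), Real.exp (c * w x) with hI
  have hIv : I = ∫ x : EuclideanSpace ℝ (Fin n), Real.exp (c * v x) :=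
    integral_congr_ae hfunae
  set F : ℝ → ℝ := fun t => ∫ x in {x : EuclideanSpace ℝ (Fin n) | t < v x},
    Real.exp (c * v x) with hF
  have hFw : ∀ t : ℝ, (∫ x in {x : EuclideanSpace ℝ (Fin n) | t < w x},
      Real.exp (c * w x)) = F t := by
    intro t
    rw [setIntegral_congr_set (hsetae t)]
    refine setIntegral_congr_ae (measurableSet_lt measurable_const hvm) ?_
    filter_upwards [hvw] with x hx _
    rw [hx]
  have hineqF : ∀ t : ℝ, r * κ ^ (1/r) * μ t ^ (1 - 1/r) ≤
      F t ^ (1/r) * (-μ' t) ^ (1 - 1/r) := by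
    intro t; have h := hineq t; rwa [hFw t] at h
  have hmv : ∀ t : ℝ, MeasurableSet {x : EuclideanSpace ℝ (Fin n) | t < v x} :=
    fun t => measurableSet_lt measurable_const hvm
  have hμnn : ∀ t, 0 ≤ μ t := fun t => by rw [hμ t]; exact ENNReal.toReal_nonneg
  have hFnn : ∀ t, 0 ≤ F t := fun t =>
    setIntegral_nonneg (hmv t) (fun x _ => (Real.exp_pos _).le)
  have hμ'np : ∀ t, μ' t ≤ 0 := by
    intro t
    have hs := hasDerivAt_iff_tendsto_slope.1 (hderiv t)
    refine le_of_tendsto' hs ?_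
    intro y
    rcases lt_trichotomy y t with h | h | h
    · rw [slope_def_field]
      apply div_nonpos_of_nonneg_of_nonpos
      · have := hmono h.le; linarith
      · linarith
    · simp [h, slope_def_field]
    · rw [slope_def_field]
      apply div_nonpos_of_nonpos_of_nonneg
      · have := hmono h.le; linarith
      · linarith
  have hvolfin : ∀ t : ℝ, volume {x : EuclideanSpace ℝ (Fin n) | t < v x} < ⊤ := by
    intro t
    refine lt_of_le_of_lt (measure_mono ?_) (hintv.measure_ge_lt_top (Real.exp_pos (c*t)))
    intro x hx
    exact Real.exp_le_exp.2 (mul_le_mul_of_nonneg_left (le_of_lt hx) hc0.le)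
  have hμv : ∀ t, μ t = (volume {x : EuclideanSpace ℝ (Fin n) | t < v x}).toReal :=
    fun t => by rw [hμ t, measure_congr (hsetae t)]
  -- difference identities on a slab
  have hdiff : ∀ s t : ℝ, s ≤ t →
      μ s = μ t + (volume ({x : EuclideanSpace ℝ (Fin n) | s < v x} \ {x | t < v x})).toReal ∧
      F s = F t + ∫ x in {x : EuclideanSpace ℝ (Fin n) | s < v x} \ {x | t < v x},
        Real.exp (c * v x) := by
    intro s t hst
    have hsub : {x : EuclideanSpace ℝ (Fin n) | t < v x} ⊆ {x | s < v x} :=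
      fun x hx => lt_of_le_of_lt hst hx
    have hunion : {x : EuclideanSpace ℝ (Fin n) | s < v x} =
        {x | t < v x} ∪ ({x | s < v x} \ {x | t < v x}) := (Set.union_diff_cancel hsub).symm
    have hdisj : Disjoint {x : EuclideanSpace ℝ (Fin n) | t < v x}
        ({x | s < v x} \ {x | t < v x}) := Set.disjoint_sdiff_right
    have hdm : MeasurableSet ({x : EuclideanSpace ℝ (Fin n) | s < v x} \ {x | t < v x}) :=
      (hmv s).diff (hmv t)
    have hdfin : volume ({x : EuclideanSpace ℝ (Fin n) | s < v x} \ {x | t < v x}) ≠ ⊤ :=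
      ne_of_lt (lt_of_le_of_lt (measure_mono Set.diff_subset) (hvolfin s))
    constructor
    · rw [hμv s, hμv t]
      conv_lhs => rw [hunion]
      rw [measure_union hdisj hdm,
        ENNReal.toReal_add (ne_of_lt (hvolfin t)) hdfin]
    · show (∫ x in {x : EuclideanSpace ℝ (Fin n) | s < v x}, Real.exp (c * v x)) = _
      conv_lhs => rw [hunion]
      rw [setIntegral_union hdisj hdm hintv.integrableOn hintv.integrableOn]
  -- slab integral bounds
  have hslab : ∀ s t : ℝ, s ≤ t →
      Real.exp (c*s) * (μ s - μ t) ≤ F s - F t ∧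
      F s - F t ≤ Real.exp (c*t) * (μ s - μ t) := by
    intro s t hst
    obtain ⟨h1, h2⟩ := hdiff s t hst
    set D : Set (EuclideanSpace ℝ (Fin n)) := {x | s < v x} \ {x | t < v x} with hD
    have hdm : MeasurableSet D := (hmv s).diff (hmv t)
    have hdfin : volume D < ⊤ := lt_of_le_of_lt (measure_mono Set.diff_subset) (hvolfin s)
    have hconst : ∀ C : ℝ, IntegrableOn (fun _ => C) D volume :=
      fun C => integrableOn_const hdfin.ne
    have hlow : ∀ x ∈ D, Real.exp (c*s) ≤ Real.exp (c * v x) := by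
      intro x hx
      exact Real.exp_le_exp.2 (mul_le_mul_of_nonneg_left (le_of_lt hx.1) hc0.le)
    have hhigh : ∀ x ∈ D, Real.exp (c * v x) ≤ Real.exp (c*t) := by
      intro x hx
      have : ¬ t < v x := hx.2
      exact Real.exp_le_exp.2 (mul_le_mul_of_nonneg_left (not_lt.1 this) hc0.le)
    have e1 : (∫ (_ : EuclideanSpace ℝ (Fin n)) in D, Real.exp (c*s)) ≤
        ∫ x in D, Real.exp (c * v x) :=
      setIntegral_mono_on (hconst _) hintv.integrableOn hdm hlow
    have e2 : (∫ x in D, Real.exp (c * v x)) ≤ ∫ (_ : EuclideanSpace ℝ (Fin n)) in D,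
        Real.exp (c*t) :=
      setIntegral_mono_on hintv.integrableOn (hconst _) hdm hhigh
    rw [setIntegral_const] at e1 e2
    have hμst : μ s - μ t = (volume D).toReal := by rw [h1]; ring
    have hFst : F s - F t = ∫ x in D, Real.exp (c * v x) := by rw [h2]; ring
    rw [hμst, hFst]
    constructor
    · calc Real.exp (c*s) * (volume D).toReal = (volume D).toReal • Real.exp (c*s) := by
            rw [smul_eq_mul]; ring
        _ ≤ _ := e1
    · calc (∫ x in D, Real.exp (c * v x)) ≤ (volume D).toReal • Real.exp (c*t) := e2
        _ = Real.exp (c*t) * (volume D).toReal := by rw [smul_eq_mul]; ring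
  -- derivative of F
  have hDF : ∀ t : ℝ, HasDerivAt F (Real.exp (c*t) * μ' t) t := by
    intro t
    rw [hasDerivAt_iff_tendsto_slope]
    have hμslope : Tendsto (slope μ t) (nhdsWithin t {t}ᶜ) (nhds (μ' t)) :=
      hasDerivAt_iff_tendsto_slope.1 (hderiv t)
    have hmaxc : Tendsto (fun y => Real.exp (c * max t y)) (nhdsWithin t {t}ᶜ)
        (nhds (Real.exp (c*t))) := by
      have hcont : Continuous (fun y : ℝ => Real.exp (c * max t y)) :=
        Real.continuous_exp.comp (continuous_const.mul (continuous_const.max continuous_id))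
      have := (hcont.tendsto t).mono_left (nhdsWithin_le_nhds : nhdsWithin t {t}ᶜ ≤ nhds t)
      simpa [max_self] using this
    have hminc : Tendsto (fun y => Real.exp (c * min t y)) (nhdsWithin t {t}ᶜ)
        (nhds (Real.exp (c*t))) := by
      have hcont : Continuous (fun y : ℝ => Real.exp (c * min t y)) :=
        Real.continuous_exp.comp (continuous_const.mul (continuous_const.min continuous_id))
      have := (hcont.tendsto t).mono_left (nhdsWithin_le_nhds : nhdsWithin t {t}ᶜ ≤ nhds t)
      simpa [min_self] using this
    refine tendsto_of_tendsto_of_tendsto_of_le_of_le' (hmaxc.mul hμslope) (hminc.mul hμslope)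
      ?_ ?_
    · refine Filter.eventually_of_mem self_mem_nhdsWithin (fun y hy => ?_)
      have hy' : y ≠ t := hy
      rcases lt_or_gt_of_ne hy' with h | h
      -- y < t
      · obtain ⟨h1, h2⟩ := hslab y t h.le
        rw [max_eq_left h.le, slope_def_field, slope_def_field, ← mul_div_assoc]
        rw [div_le_div_right_of_neg (by linarith : y - t < 0)]
        have : F y - F t ≤ Real.exp (c*t) * (μ y - μ t) := h2
        linarith [this]
      -- t < y
      · obtain ⟨h1, h2⟩ := hslab t y h.le
        rw [max_eq_right h.le, slope_def_field, slope_def_field, ← mul_div_assoc]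
        rw [div_le_div_iff_of_pos_right (by linarith : (0:ℝ) < y - t)]
        nlinarith [h2]
    · refine Filter.eventually_of_mem self_mem_nhdsWithin (fun y hy => ?_)
      have hy' : y ≠ t := hy
      rcases lt_or_gt_of_ne hy' with h | h
      · obtain ⟨h1, h2⟩ := hslab y t h.le
        rw [min_eq_right h.le, slope_def_field, slope_def_field, ← mul_div_assoc]
        rw [div_le_div_right_of_neg (by linarith : y - t < 0)]
        linarith [h1]
      · obtain ⟨h1, h2⟩ := hslab t y h.le
        rw [min_eq_left h.le, slope_def_field, slope_def_field, ← mul_div_assoc]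
        rw [div_le_div_iff_of_pos_right (by linarith : (0:ℝ) < y - t)]
        nlinarith [h1]
  -- key pointwise inequality
  have e1 : (1 - 1/r) * a = 1 := by
    rw [ha]; field_simp
  have e2 : (1/r) * a = a - 1 := by
    rw [ha]; field_simp; ring
  have e3 : (1:ℝ)/(r-1) = a - 1 := by
    rw [ha]; field_simp; ring
  have hkey : ∀ t : ℝ, lamn * μ t ≤ F t ^ (a - 1) * (-μ' t) := by
    intro t
    have hμt := hμnn t
    have hFt := hFnn t
    have hμ't : 0 ≤ -μ' t := neg_nonneg.2 (hμ'np t)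
    have hA : 0 ≤ r * κ ^ (1/r) * μ t ^ (1 - 1/r) :=
      mul_nonneg (mul_nonneg hr0.le (Real.rpow_nonneg hκ.le _)) (Real.rpow_nonneg hμt _)
    have h := Real.rpow_le_rpow hA (hineqF t) ha0.le
    rw [Real.mul_rpow (mul_nonneg hr0.le (Real.rpow_nonneg hκ.le _)) (Real.rpow_nonneg hμt _),
        Real.mul_rpow hr0.le (Real.rpow_nonneg hκ.le _),
        Real.mul_rpow (Real.rpow_nonneg hFt _) (Real.rpow_nonneg hμ't _),
        ← Real.rpow_mul hκ.le, ← Real.rpow_mul hμt, ← Real.rpow_mul hFt,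
        ← Real.rpow_mul hμ't, e1, e2, Real.rpow_one, Real.rpow_one] at h
    calc lamn * μ t = r ^ a * κ ^ ((1:ℝ)/(r-1)) * μ t := by rw [hlam]
      _ = r ^ a * κ ^ (a - 1) * μ t := by rw [e3]
      _ ≤ _ := h
  -- the monotone comparison function Ψ
  set Ψ : ℝ → ℝ := fun t => (F t - Real.exp (c*t) * μ t) - F t ^ a with hΨdef
  set Ψ' : ℝ → ℝ := fun t =>
    (Real.exp (c*t) * μ' t - (Real.exp (c*t) * c * μ t + Real.exp (c*t) * μ' t))
      - Real.exp (c*t) * μ' t * a * F t ^ (a - 1) with hΨ'def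
  have hDΨ : ∀ t, HasDerivAt Ψ (Ψ' t) t := by
    intro t
    have h1 : HasDerivAt (fun t : ℝ => Real.exp (c*t)) (Real.exp (c*t) * c) t := by
      have := ((hasDerivAt_id t).const_mul c).exp
      simpa [mul_comm] using this
    have h3 := ((hDF t).sub (h1.mul (hderiv t))).sub ((hDF t).rpow_const (Or.inr ha1.le))
    rw [hΨdef, hΨ'def]
    exact h3
  have hΨ'nn : ∀ t, 0 ≤ Ψ' t := by
    intro t
    have hk := mul_le_mul_of_nonneg_left (hkey t) ha0.le
    have hexp := Real.exp_pos (c*t)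
    have h2 : Real.exp (c*t) * (a * (lamn * μ t)) ≤
        Real.exp (c*t) * (a * (F t ^ (a-1) * (-μ' t))) :=
      mul_le_mul_of_nonneg_left hk hexp.le
    have h2' : Real.exp (c*t) * (c * μ t) ≤
        Real.exp (c*t) * (a * (F t ^ (a-1) * (-μ' t))) := by
      calc Real.exp (c*t) * (c * μ t) = Real.exp (c*t) * (a * (lamn * μ t)) := by
            rw [hca]; ring
        _ ≤ _ := h2
    rw [hΨ'def]
    simp only
    nlinarith [h2']
  have hΨmono : Monotone Ψ := monotone_of_hasDerivAt_nonneg hDΨ hΨ'nn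
  -- endpoint values
  have hμT : μ T = 0 := by
    have h1 : Tendsto μ (nhdsWithin T (Set.Iio T)) (nhds (μ T)) :=
      ((hderiv T).continuousAt.continuousWithinAt : ContinuousWithinAt μ (Set.Iio T) T)
    exact tendsto_nhds_unique h1 htend
  obtain ⟨x₀, hx₀, hwle⟩ := hT
  have hvT : ∀ᵐ x : EuclideanSpace ℝ (Fin n) ∂volume, v x ≤ T := by
    filter_upwards [hvw] with x hx
    rw [← hx]; exact hwle x
  have hFT : F T = 0 := by
    have hvT' := hvT
    rw [ae_iff] at hvT'
    have hzero : volume {x : EuclideanSpace ℝ (Fin n) | T < v x} = 0 :=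
      measure_mono_null (fun x hx => not_le.2 hx) hvT'
    exact setIntegral_measure_zero _ hzero
  have hμT0 : μ T = 0 := hμT
  have hΨT : Ψ T = 0 := by
    rw [hΨdef]
    simp only
    rw [hFT, hμT, Real.zero_rpow (ne_of_gt ha0)]
    ring
  have hmain : ∀ s, s ≤ T → F s ≤ F s ^ a + Real.exp (c*s) * μ s := by
    intro s hsT
    have := hΨmono hsT
    rw [hΨT] at this
    have : (F s - Real.exp (c*s) * μ s) - F s ^ a ≤ 0 := this
    linarith
  -- tail of the integral
  set Tail : ℝ → ℝ := fun s => ∫ x in {x : EuclideanSpace ℝ (Fin n) | v x ≤ s},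
    Real.exp (c * v x) with hTaildef
  have hTailnn : ∀ s, 0 ≤ Tail s := fun s =>
    setIntegral_nonneg (measurableSet_le hvm measurable_const) (fun x _ => (Real.exp_pos _).le)
  have hcompl : ∀ s : ℝ, F s + Tail s = I := by
    intro s
    rw [hIv]
    have hset : {x : EuclideanSpace ℝ (Fin n) | v x ≤ s} = {x | s < v x}ᶜ := by
      ext x; simp [not_lt]
    rw [hTaildef]
    simp only
    rw [hset]
    exact integral_add_compl (hmv s) hintv
  have hTmono : Monotone Tail := by
    intro s s' hss'
    refine setIntegral_mono_set hintv.integrableOn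
      (Filter.Eventually.of_forall (fun x => (Real.exp_pos _).le))
      (HasSubset.Subset.eventuallyLE (fun x hx => le_trans hx hss'))
  have htail0 : Tendsto (fun k : ℕ => Tail (-(k:ℝ))) atTop (nhds 0) := by
    have hmeas : ∀ k : ℕ, AEStronglyMeasurable
        (fun x => Set.indicator {x : EuclideanSpace ℝ (Fin n) | v x ≤ -(k:ℝ)}
          (fun x => Real.exp (c * v x)) x) volume := by
      intro k
      exact (hintv.1.indicator (measurableSet_le hvm measurable_const))
    have hbd : ∀ k : ℕ, ∀ᵐ x : EuclideanSpace ℝ (Fin n) ∂volume,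
        ‖Set.indicator {x : EuclideanSpace ℝ (Fin n) | v x ≤ -(k:ℝ)}
          (fun x => Real.exp (c * v x)) x‖ ≤ Real.exp (c * v x) := by
      intro k
      refine Filter.Eventually.of_forall (fun x => ?_)
      rw [Real.norm_eq_abs, abs_of_nonneg (Set.indicator_nonneg
        (fun y _ => (Real.exp_pos _).le) x)]
      exact Set.indicator_le_self' (fun y _ => (Real.exp_pos _).le) x
    have hlim : ∀ᵐ x : EuclideanSpace ℝ (Fin n) ∂volume,
        Tendsto (fun k : ℕ => Set.indicator {x : EuclideanSpace ℝ (Fin n) | v x ≤ -(k:ℝ)}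
          (fun x => Real.exp (c * v x)) x) atTop (nhds 0) := by
      refine Filter.Eventually.of_forall (fun x => ?_)
      refine Tendsto.congr' ?_ tendsto_const_nhds
      rw [Filter.EventuallyEq, eventually_atTop]
      obtain ⟨k₀, hk₀⟩ := exists_nat_gt (-(v x))
      refine ⟨k₀, fun k hk => ?_⟩
      have hnm : x ∉ {x : EuclideanSpace ℝ (Fin n) | v x ≤ -(k:ℝ)} := by
        simp only [Set.mem_setOf_eq]
        push_neg
        have hkk : (k₀ : ℝ) ≤ (k : ℝ) := by exact_mod_cast hk
        linarith
      exact (Set.indicator_of_notMem hnm (fun y => Real.exp (c * v y))).symm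
    have h := tendsto_integral_of_dominated_convergence _ hmeas hintv hbd hlim
    simp only [integral_zero] at h
    convert h using 2 with k
    rw [hTaildef]
    simp only
    rw [integral_indicator (measurableSet_le hvm measurable_const)]
  -- main estimate : I ≤ I ^ a
  have hFleI : ∀ s, F s ≤ I := by
    intro s
    have := hcompl s
    have h2 := hTailnn s
    linarith
  have hIa : I ≤ I ^ a := by
    refine le_of_forall_pos_le_add (fun ε hε => ?_)
    obtain ⟨k, hk⟩ := (htail0.eventually (gt_mem_nhds (by linarith : (0:ℝ) < ε/3))).exists
    set s' : ℝ := -(k:ℝ) with hs'def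
    set X : ℝ := ε/(3*(μ s' + 1)) with hXdef
    have hμs' := hμnn s'
    have hX : 0 < X := by
      rw [hXdef]
      exact div_pos hε (by linarith)
    set s : ℝ := min (min s' T) (Real.log X / c) with hsdef
    have hsT : s ≤ T := le_trans (min_le_left _ _) (min_le_right _ _)
    have hss' : s ≤ s' := le_trans (min_le_left _ _) (min_le_left _ _)
    have hexp : Real.exp (c*s) ≤ X := by
      have h1 : s ≤ Real.log X / c := min_le_right _ _
      have h2 : c * s ≤ Real.log X := by
        rw [← le_div_iff₀' hc0]
        exact h1
      calc Real.exp (c*s) ≤ Real.exp (Real.log X) := Real.exp_le_exp.2 h2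
        _ = X := Real.exp_log hX
    have he1 : Real.exp (c*s) * μ s' ≤ ε/3 := by
      have h3 : Real.exp (c*s) * μ s' ≤ X * μ s' :=
        mul_le_mul_of_nonneg_right hexp hμs'
      have h4 : X * μ s' ≤ ε/3 := by
        have hd : (0:ℝ) < μ s' + 1 := by linarith
        have h5 : X * μ s' = (ε/3) * (μ s' / (μ s' + 1)) := by
          rw [hXdef]; field_simp
        have h6 : μ s' / (μ s' + 1) ≤ 1 := by
          rw [div_le_one hd]; linarith
        calc X * μ s' = (ε/3) * (μ s' / (μ s' + 1)) := h5
          _ ≤ (ε/3) * 1 := mul_le_mul_of_nonneg_left h6 (by linarith)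
          _ = ε/3 := mul_one _
      linarith
    -- exp(c s) μ s ≤ Tail s' + ε/3
    have hslab' := (hslab s s' hss').1
    have hFdiff : F s - F s' = Tail s' - Tail s := by
      have := hcompl s
      have h2 := hcompl s'
      linarith
    have he2 : Real.exp (c*s) * μ s ≤ Tail s' + ε/3 := by
      have : Real.exp (c*s) * μ s - Real.exp (c*s) * μ s' ≤ F s - F s' := by
        calc Real.exp (c*s) * μ s - Real.exp (c*s) * μ s'
            = Real.exp (c*s) * (μ s - μ s') := by ring
          _ ≤ F s - F s' := hslab'
      have hTs := hTailnn s
      rw [hFdiff] at this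
      linarith [he1]
    have hFsa : F s ^ a ≤ I ^ a := Real.rpow_le_rpow (hFnn s) (hFleI s) ha0.le
    have hmain' := hmain s hsT
    have hTs'ε : Tail s' < ε/3 := hk
    have hTss' : Tail s ≤ Tail s' := hTmono hss'
    have hIs := hcompl s
    linarith
  -- conclude
  by_contra hlt
  push_neg at hlt
  have h1 : I ^ a < I ^ (1:ℝ) := Real.rpow_lt_rpow_of_exponent_gt hpos hlt ha1
  rw [Real.rpow_one] at h1
  linarith
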